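/- Let (Y, V, v⁰; σ, τ) be a distinguished triple. Then there exist subspaces W₁ and W₂ of V such that: V = W₁ ⊕ W₂; W₁ and W₂ are Y-invariant and σ-invariant; τ(W₁, W₂) = 0 and the restrictions of τ to W₁ and to W₂ are nondegenerate (W₂ may be the zero subspace); v⁰ ∈ W₁; the restriction of Y to W₁ is nilpotent; and the distinguished triple (Y|W₁, W₁, v⁰; σ|W₁, τ|W₁) is indecomposable. -/

import Mathlib

/-- A vector `w` is *special* for the antilinear map `σ`:  it is nonzero and an
eigenvector of `σ` with eigenvalue `±1` when `σ ∘ σ = id`, resp. `±i` when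
`σ ∘ σ = -id`. -/
def IsSpecial {V : Type*} [AddCommGroup V] [Module ℂ V] (σ : V → V) (w : V) : Prop :=
  w ≠ 0 ∧
    ((∀ v : V, σ (σ v) = v) → (σ w = w ∨ σ w = -w)) ∧
    ((∀ v : V, σ (σ v) = -v) → (σ w = Complex.I • w ∨ σ w = -(Complex.I • w)))

/-- Lemma 2.4: every distinguished triple splits off an indecomposable
nilpotent distinguished summand `W₁` containing `v⁰`, with a `τ`-orthogonal
complementary summand `W₂`. -/
theorem exists_indecomposable_nilpotent_summand
    {V : Type*} [AddCommGroup V] [Module ℂ V] [FiniteDimensional ℂ V]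
    (σ : V → V) (Y : Module.End ℂ V) (τ : V →ₗ[ℂ] V →ₗ[ℂ] ℂ) (v0 : V)
    (hσadd : ∀ u v : V, σ (u + v) = σ u + σ v)
    (hσsmul : ∀ (a : ℂ) (v : V), σ (a • v) = (starRingEnd ℂ) a • σ v)
    (hσbij : Function.Bijective σ)
    (hσinv : (∀ v : V, σ (σ v) = v) ∨ (∀ v : V, σ (σ v) = -v))
    (hτl : ∀ u : V, (∀ v : V, τ u v = 0) → u = 0)
    (hτr : ∀ v : V, (∀ u : V, τ u v = 0) → v = 0)
    (hτsa : (∀ u v : V, τ u v = τ v u) ∨ (∀ u v : V, τ u v = -(τ v u)))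
    (hτσ : ∀ u v : V, τ (σ u) (σ v) = (starRingEnd ℂ) (τ u v))
    (hYσ : ∀ v : V, Y (σ v) = σ (Y v))
    (hskew : ∀ u v : V, τ (Y u) v + τ u (Y v) = 0)
    (hv0 : IsSpecial σ v0) (hτv0 : τ v0 v0 = 0) (hYv0 : Y v0 = 0) :
    ∃ W₁ W₂ : Submodule ℂ V,
      W₁ ⊔ W₂ = ⊤ ∧ W₁ ⊓ W₂ = ⊥ ∧
      (∀ w ∈ W₁, Y w ∈ W₁) ∧ (∀ w ∈ W₂, Y w ∈ W₂) ∧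
      (∀ w ∈ W₁, σ w ∈ W₁) ∧ (∀ w ∈ W₂, σ w ∈ W₂) ∧
      (∀ u ∈ W₁, ∀ v ∈ W₂, τ u v = 0 ∧ τ v u = 0) ∧
      (∀ u ∈ W₁, (∀ v ∈ W₁, τ u v = 0) → u = 0) ∧
      (∀ v ∈ W₁, (∀ u ∈ W₁, τ u v = 0) → v = 0) ∧
      (∀ u ∈ W₂, (∀ v ∈ W₂, τ u v = 0) → u = 0) ∧
      (∀ v ∈ W₂, (∀ u ∈ W₂, τ u v = 0) → v = 0) ∧
      v0 ∈ W₁ ∧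
      (∃ n : ℕ, ∀ w ∈ W₁, (Y ^ n) w = 0) ∧
      (∀ W' : Submodule ℂ V, W' ≤ W₁ →
        (∀ w ∈ W', Y w ∈ W') → (∀ w ∈ W', σ w ∈ W') → v0 ∈ W' →
        (∀ u ∈ W', (∀ v ∈ W', τ u v = 0) → u = 0) →
        (∀ v ∈ W', (∀ u ∈ W', τ u v = 0) → v = 0) →
        W' = W₁) := by
  classical
  -- basic facts about σ
  have hσ0 : σ 0 = 0 := by
    have h := hσadd 0 0
    rw [add_zero] at h
    exact (left_eq_add.mp h)
  have hσneg : ∀ v : V, σ (-v) = -σ v := by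
    intro v
    have h := hσadd v (-v)
    rw [add_neg_cancel, hσ0] at h
    exact (eq_neg_of_add_eq_zero_right h.symm)
  -- skew-symmetry of Y, iterated
  have hskew1 : ∀ u v : V, τ (Y u) v = -(τ u (Y v)) := by
    intro u v
    have h := hskew u v
    linear_combination h
  have hsgn : ∀ (m : ℕ) (u v : V), τ ((Y ^ m) u) v = (-1 : ℂ) ^ m * τ u ((Y ^ m) v) := by
    intro m
    induction m with
    | zero => intro u v; simp
    | succ m ih =>
      intro u v
      have h1 : (Y ^ (m + 1)) u = (Y ^ m) (Y u) := by
        rw [pow_succ]; rfl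
      have h2 : Y ((Y ^ m) v) = (Y ^ (m + 1)) v := by
        rw [pow_succ']; rfl
      rw [h1, ih (Y u) v, hskew1, ← h2]
      ring
  -- the Fitting decomposition of V along Y
  set n := Module.finrank ℂ V with hn
  set K : Submodule ℂ V := LinearMap.ker (Y ^ n) with hK
  set R : Submodule ℂ V := LinearMap.range (Y ^ n) with hR
  have hker2 : LinearMap.ker (Y ^ (n + n)) = K := by
    rw [hK, hn]
    exact Module.End.ker_pow_eq_ker_pow_finrank_of_le (Nat.le_add_right _ _)
  have hinf : K ⊓ R = ⊥ := by
    rw [eq_bot_iff]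
    rintro x hx
    obtain ⟨hxk, y, rfl⟩ := Submodule.mem_inf.mp hx
    have hy : y ∈ LinearMap.ker (Y ^ (n + n)) := by
      rw [LinearMap.mem_ker, pow_add, Module.End.mul_apply]
      exact hxk
    rw [hker2] at hy
    simpa [hK] using hy
  have hsup : K ⊔ R = ⊤ := by
    apply Submodule.eq_top_of_finrank_eq
    have h1 := Submodule.finrank_sup_add_finrank_inf_eq K R
    have h2 := LinearMap.finrank_range_add_finrank_ker (Y ^ n)
    rw [← hK, ← hR] at h2
    rw [hinf, finrank_bot] at h1
    rw [← hn] at h2 ⊢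
    omega
  -- τ pairs K trivially with R
  have hKRl : ∀ u ∈ K, ∀ w : V, τ u ((Y ^ n) w) = 0 := by
    intro u hu w
    have h := hsgn n u w
    rw [LinearMap.mem_ker.mp hu] at h
    simp only [map_zero, LinearMap.zero_apply] at h
    have hne : ((-1 : ℂ) ^ n) ≠ 0 := by
      apply pow_ne_zero; norm_num
    rcases mul_eq_zero.mp h.symm with h' | h'
    · exact absurd h' hne
    · exact h'
  have hKRr : ∀ u ∈ K, ∀ w : V, τ ((Y ^ n) w) u = 0 := by
    intro u hu w
    rw [hsgn n w u, LinearMap.mem_ker.mp hu]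
    simp
  -- τ is nondegenerate on K
  have hKl : ∀ u ∈ K, (∀ v ∈ K, τ u v = 0) → u = 0 := by
    intro u hu h
    apply hτl
    intro v
    obtain ⟨a, ha, b, hb, rfl⟩ := Submodule.mem_sup.mp (hsup ▸ Submodule.mem_top (x := v))
    obtain ⟨w, rfl⟩ := hb
    rw [map_add, h a ha, hKRl u hu w, add_zero]
  have hKr : ∀ v ∈ K, (∀ u ∈ K, τ u v = 0) → v = 0 := by
    intro v hv h
    apply hτr
    intro u
    obtain ⟨a, ha, b, hb, rfl⟩ := Submodule.mem_sup.mp (hsup ▸ Submodule.mem_top (x := u))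
    obtain ⟨w, rfl⟩ := hb
    rw [map_add, LinearMap.add_apply, h a ha, hKRr v hv w, add_zero]
  -- K is Y- and σ-invariant and contains v0
  have hKY : ∀ w ∈ K, Y w ∈ K := by
    intro w hw
    rw [hK, LinearMap.mem_ker]
    have h1 : (Y ^ n) (Y w) = Y ((Y ^ n) w) := by
      rw [← Module.End.mul_apply, ← pow_succ, pow_succ', Module.End.mul_apply]
    rw [h1, LinearMap.mem_ker.mp hw, map_zero]
  have hσpow : ∀ (m : ℕ) (v : V), (Y ^ m) (σ v) = σ ((Y ^ m) v) := by
    intro m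
    induction m with
    | zero => intro v; simp
    | succ m ih =>
      intro v
      have h1 : (Y ^ (m + 1)) (σ v) = Y ((Y ^ m) (σ v)) := by
        rw [pow_succ']; rfl
      have h2 : (Y ^ (m + 1)) v = Y ((Y ^ m) v) := by
        rw [pow_succ']; rfl
      rw [h1, ih, hYσ, h2]
  have hKσ : ∀ w ∈ K, σ w ∈ K := by
    intro w hw
    rw [hK, LinearMap.mem_ker, hσpow, LinearMap.mem_ker.mp hw, hσ0]
  have hv0K : v0 ∈ K := by
    have hnt : Nontrivial V := nontrivial_of_ne v0 0 hv0.1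
    have hn1 : 1 ≤ n := hn ▸ Module.finrank_pos
    obtain ⟨m, hm⟩ : ∃ m, n = m + 1 := ⟨n - 1, by omega⟩
    rw [hK, LinearMap.mem_ker, hm, pow_succ, Module.End.mul_apply, hYv0, map_zero]
  -- select a minimal-dimensional admissible subspace of K
  set P : Submodule ℂ V → Prop := fun W =>
    W ≤ K ∧ (∀ w ∈ W, Y w ∈ W) ∧ (∀ w ∈ W, σ w ∈ W) ∧ v0 ∈ W ∧
      (∀ u ∈ W, (∀ v ∈ W, τ u v = 0) → u = 0) ∧
      (∀ v ∈ W, (∀ u ∈ W, τ u v = 0) → v = 0) with hP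
  have hPK : P K := ⟨le_refl K, hKY, hKσ, hv0K, hKl, hKr⟩
  have hSne : {m : ℕ | ∃ W : Submodule ℂ V, P W ∧ Module.finrank ℂ W = m}.Nonempty :=
    ⟨Module.finrank ℂ K, K, hPK, rfl⟩
  obtain ⟨W₁, hW₁P, hW₁rank⟩ := Nat.sInf_mem hSne
  obtain ⟨hW₁K, hW₁Y, hW₁σ, hv0W₁, hW₁l, hW₁r⟩ := hW₁P
  -- reflexivity of τ
  have hrefl : ∀ u v : V, τ u v = 0 → τ v u = 0 := by
    rcases hτsa with h | h
    · intro u v huv; rw [h v u, huv]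
    · intro u v huv; rw [h v u, huv, neg_zero]
  have hIsRefl : LinearMap.BilinForm.IsRefl τ := fun u v h => hrefl u v h
  -- the orthogonal complement
  set W₂ : Submodule ℂ V := LinearMap.BilinForm.orthogonal τ W₁ with hW₂def
  have hmemW₂ : ∀ v : V, v ∈ W₂ ↔ ∀ u ∈ W₁, τ u v = 0 := by
    intro v
    rw [hW₂def, LinearMap.BilinForm.mem_orthogonal_iff]
  have hnd : (LinearMap.BilinForm.restrict τ W₁).Nondegenerate := by
    refine ⟨?_, ?_⟩
    · intro x hx
      have hx0 : (x : V) = 0 := by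
        apply hW₁l x x.2
        intro v hv
        simpa using hx ⟨v, hv⟩
      exact Subtype.ext hx0
    · intro x hx
      have hx0 : (x : V) = 0 := by
        apply hW₁r x x.2
        intro v hv
        simpa using hx ⟨v, hv⟩
      exact Subtype.ext hx0
  have hcompl : IsCompl W₁ W₂ :=
    LinearMap.BilinForm.isCompl_orthogonal_of_restrict_nondegenerate hIsRefl hnd
  refine ⟨W₁, W₂, hcompl.sup_eq_top, hcompl.inf_eq_bot, hW₁Y, ?_, hW₁σ, ?_, ?_, hW₁l, hW₁r,
    ?_, ?_, hv0W₁, ⟨n, ?_⟩, ?_⟩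
  · -- W₂ is Y-invariant
    intro w hw
    rw [hmemW₂]
    intro u hu
    have h := hskew u w
    rw [(hmemW₂ w).mp hw (Y u) (hW₁Y u hu)] at h
    simpa using h
  · -- W₂ is σ-invariant
    intro w hw
    rw [hmemW₂]
    intro u hu
    have hsurj : ∃ u' ∈ W₁, σ u' = u := by
      rcases hσinv with h | h
      · exact ⟨σ u, hW₁σ u hu, h u⟩
      · refine ⟨-σ u, Submodule.neg_mem _ (hW₁σ u hu), ?_⟩
        rw [hσneg, h u, neg_neg]
    obtain ⟨u', hu', rfl⟩ := hsurj
    rw [hτσ, (hmemW₂ w).mp hw u' hu', map_zero]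
  · -- orthogonality
    intro u hu v hv
    have h1 : τ u v = 0 := (hmemW₂ v).mp hv u hu
    exact ⟨h1, hrefl u v h1⟩
  · -- τ nondegenerate on W₂, left
    intro u hu h
    apply hτl
    intro v
    obtain ⟨a, ha, b, hb, rfl⟩ :=
      Submodule.mem_sup.mp (hcompl.sup_eq_top ▸ Submodule.mem_top (x := v))
    rw [map_add, h b hb, hrefl a u ((hmemW₂ u).mp hu a ha), zero_add]
  · -- τ nondegenerate on W₂, right
    intro v hv h
    apply hτr
    intro x
    obtain ⟨a, ha, b, hb, rfl⟩ :=
      Submodule.mem_sup.mp (hcompl.sup_eq_top ▸ Submodule.mem_top (x := x))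
    rw [map_add, LinearMap.add_apply, h b hb, (hmemW₂ v).mp hv a ha, zero_add]
  · -- nilpotency on W₁
    intro w hw
    exact LinearMap.mem_ker.mp (hW₁K hw)
  · -- minimality
    intro W' hle hY' hσ' hv0' hl' hr'
    have hPW' : P W' := ⟨hle.trans hW₁K, hY', hσ', hv0', hl', hr'⟩
    have hge : Module.finrank ℂ W₁ ≤ Module.finrank ℂ W' := by
      rw [hW₁rank]
      exact Nat.sInf_le ⟨W', hPW', rfl⟩
    exact Submodule.eq_of_le_of_finrank_le hle hge
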